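/- Let f be holomorphic on a neighborhood of the closed disk D(0, r₃) with f(0) = 1, let 0 < r₁ < r₂ < r₃, and let z₁, …, z_n be the zeros of f in D(0, r₂) counted with multiplicity. Then n ≤ (log(r₃/r₂))^{-1} · log max_{|z| = r₃} |f(z)|. -/

import Mathlib

open scoped BigOperators

/-- Jensen zero-counting bound. If `f` is holomorphic near the closed
disk of radius `r₃`, `f 0 = 1`, and `z₁,…,z_n` are the zeros of `f` in `D(0,r₂)`
counted with multiplicity (encoded by the factorization `f = ∏ (· - zs i) * g`
with `g` holomorphic and nonvanishing on the closed disk of radius `r₂`), then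
`n ≤ (log(r₃/r₂))⁻¹ log max_{|z|=r₃} |f|`. -/
theorem stmt9 (f g : ℂ → ℂ) (r₁ r₂ r₃ M : ℝ) (n : ℕ) (zs : Fin n → ℂ)
    (h1 : 0 < r₁) (h12 : r₁ < r₂) (h23 : r₂ < r₃)
    (hf : ∃ U : Set ℂ, IsOpen U ∧ Metric.closedBall 0 r₃ ⊆ U ∧
      DifferentiableOn ℂ f U ∧ DifferentiableOn ℂ g U)
    (hzs : ∀ i, zs i ∈ Metric.ball (0 : ℂ) r₂)
    (hfac : ∀ z ∈ Metric.closedBall (0 : ℂ) r₃,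
      f z = (∏ i : Fin n, (z - zs i)) * g z)
    (hg : ∀ z ∈ Metric.closedBall (0 : ℂ) r₂, g z ≠ 0)
    (hf0 : f 0 = 1)
    (hM : ∀ z : ℂ, ‖z‖ = r₃ → ‖f z‖ ≤ M) :
    (n : ℝ) ≤ (Real.log (r₃ / r₂))⁻¹ * Real.log M := by
  obtain ⟨U, hUopen, hUsub, hfd, hgd⟩ := hf
  have hr2 : 0 < r₂ := h1.trans h12
  have hr3 : (0:ℝ) < r₃ := hr2.trans h23
  set F : ℂ → ℂ := fun z => g z * ∏ i, ((r₃:ℂ)^2 - (starRingEnd ℂ) (zs i) * z)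
    with hFdef
  -- F is differentiable on U
  have hFd : DifferentiableOn ℂ F U := by
    apply hgd.mul
    apply Differentiable.differentiableOn
    apply Differentiable.fun_finsetProd
    intro i _
    fun_prop
  -- boundary bound
  have hbd : ∀ z ∈ frontier (Metric.ball (0:ℂ) r₃), ‖F z‖ ≤ M * r₃ ^ n := by
    intro z hz
    rw [frontier_ball _ hr3.ne'] at hz
    have hz3 : ‖z‖ = r₃ := by
      simpa [Complex.dist_eq] using hz
    have hzc : z ∈ Metric.closedBall (0:ℂ) r₃ := by
      simp [Complex.dist_eq, hz3]
    have key : ∀ i, ‖(r₃:ℂ)^2 - (starRingEnd ℂ) (zs i) * z‖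
        = r₃ * ‖z - zs i‖ := by
      intro i
      have hzz : z * (starRingEnd ℂ) z = ((r₃:ℝ)^2 : ℂ) := by
        rw [Complex.mul_conj, Complex.normSq_eq_norm_sq, hz3]
        push_cast
        ring
      have : (r₃:ℂ)^2 - (starRingEnd ℂ) (zs i) * z = z * (starRingEnd ℂ) (z - zs i) := by
        rw [map_sub, mul_sub]
        rw [hzz]
        push_cast
        ring
      rw [this, norm_mul, Complex.norm_conj, hz3]
    have hFz : ‖F z‖ = r₃ ^ n * ‖f z‖ := by
      rw [hfac z hzc]
      simp only [hFdef, norm_mul, norm_prod, key]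
      rw [Finset.prod_mul_distrib, Finset.prod_const, Finset.card_univ, Fintype.card_fin]
      ring
    calc ‖F z‖ = r₃ ^ n * ‖f z‖ := hFz
      _ ≤ r₃ ^ n * M := by
          exact mul_le_mul_of_nonneg_left (hM z hz3) (by positivity)
      _ = M * r₃ ^ n := by ring
  -- max modulus
  have hsub : Metric.ball (0:ℂ) r₃ ⊆ U :=
    Metric.ball_subset_closedBall.trans hUsub
  have hDiff : DiffContOnCl ℂ F (Metric.ball (0:ℂ) r₃) := by
    apply DifferentiableOn.diffContOnCl
    rw [closure_ball _ hr3.ne']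
    exact hFd.mono hUsub
  have h0 : ‖F 0‖ ≤ M * r₃ ^ n := by
    apply Complex.norm_le_of_forall_mem_frontier_norm_le Metric.isBounded_ball hDiff hbd
    rw [closure_ball _ hr3.ne']
    simp [hr3.le]
  -- value at 0
  have h0mem : (0:ℂ) ∈ Metric.closedBall (0:ℂ) r₃ := by simp [hr3.le]
  have hf0' : (1:ℂ) = (∏ i : Fin n, ((0:ℂ) - zs i)) * g 0 := by
    rw [← hf0]; exact hfac 0 h0mem
  have hPg : (∏ i : Fin n, ‖zs i‖) * ‖g 0‖ = 1 := by
    have := congrArg (‖·‖) hf0'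
    simpa [norm_prod] using this.symm
  have hP_pos : 0 < ∏ i : Fin n, ‖zs i‖ := by
    rcases n.eq_zero_or_pos with h | h
    · subst h; simp
    · rcases (mul_pos_iff.mp (hPg ▸ (one_pos : (0:ℝ) < 1))) with ⟨h1', _⟩ | ⟨h1', _⟩
      · exact h1'
      · exact absurd h1' (not_lt.mpr (Finset.prod_nonneg fun i _ => norm_nonneg _))
  have hF0 : ‖F 0‖ = (r₃^2) ^ n * ‖g 0‖ := by
    simp only [hFdef]
    rw [norm_mul]
    simp [mul_comm]
  -- derive r₃^n ≤ M * ∏ |zs i|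
  have hg0 : ‖g 0‖ = (∏ i : Fin n, ‖zs i‖)⁻¹ := by
    field_simp
    linarith [hPg]
  have hkey : r₃ ^ n ≤ M * ∏ i : Fin n, ‖zs i‖ := by
    have h0' : (r₃^2) ^ n * (∏ i : Fin n, ‖zs i‖)⁻¹ ≤ M * r₃ ^ n := by
      calc (r₃^2) ^ n * (∏ i : Fin n, ‖zs i‖)⁻¹
          = ‖F 0‖ := by rw [hF0, hg0]
        _ ≤ M * r₃ ^ n := h0
    have hrn : (0:ℝ) < r₃ ^ n := by positivity
    have h2 : (r₃ ^ n) * (r₃ ^ n) ≤ (M * ∏ i : Fin n, ‖zs i‖) * r₃ ^ n := by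
      have h3 := mul_le_mul_of_nonneg_right h0' hP_pos.le
      calc r₃ ^ n * r₃ ^ n
          = (r₃^2) ^ n * (∏ i : Fin n, ‖zs i‖)⁻¹ * ∏ i : Fin n, ‖zs i‖ := by
            field_simp; ring
        _ ≤ M * r₃ ^ n * ∏ i : Fin n, ‖zs i‖ := h3
        _ = (M * ∏ i : Fin n, ‖zs i‖) * r₃ ^ n := by ring
    exact le_of_mul_le_mul_right h2 hrn
  -- ∏ |zs i| ≤ r₂^n
  have hPle : (∏ i : Fin n, ‖zs i‖) ≤ r₂ ^ n := by
    have h : ∏ i : Fin n, ‖zs i‖ ≤ ∏ _i : Fin n, r₂ := by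
      apply Finset.prod_le_prod (fun i _ => norm_nonneg _)
      intro i _
      have := hzs i
      rw [Metric.mem_ball, Complex.dist_eq, sub_zero] at this
      exact this.le
    simpa using h
  have hMpos : 0 < M := by
    have hrn : (0:ℝ) < r₃ ^ n := by positivity
    nlinarith [hkey, hP_pos, hPle, pow_pos hr2 n]
  have hratio : (r₃ / r₂) ^ n ≤ M := by
    rw [div_pow, div_le_iff₀ (by positivity)]
    calc r₃ ^ n ≤ M * ∏ i : Fin n, ‖zs i‖ := hkey
      _ ≤ M * r₂ ^ n := by
          exact mul_le_mul_of_nonneg_left hPle hMpos.le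
  -- pass to logs
  have hlogpos : 0 < Real.log (r₃ / r₂) :=
    Real.log_pos (by rw [lt_div_iff₀ hr2]; linarith)
  have hlog : (n : ℝ) * Real.log (r₃ / r₂) ≤ Real.log M := by
    have := Real.log_le_log (by positivity) hratio
    rwa [Real.log_pow] at this
  rw [inv_mul_eq_div, le_div_iff₀ hlogpos]
  exact hlog
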